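/- arXiv:2402.04622 — 2 statements merged into one kernel-verified Lean document; each statement's English description precedes it below -/
import Mathlib

section
/- Let $n \ge 1$ and $1 \le k \le n$. If $\lambda \in \overline{\Gamma_k^+} \subset \mathbb{R}^n$, then for every index $1 \le i \le n$ one has $\sigma_{k-1}(\lambda \setminus i) \ge 0$, where $\lambda\setminus i$ is the $(n-1)$-tuple obtained from $\lambda$ by deleting the $i$-th entry. (Equivalently: the $(k-1)$-th Newton transformation $T_{k-1}$ is positive semidefinite at any symmetric matrix whose eigenvalue vector lies in $\overline{\Gamma_k^+}$.) -/
open Finset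

/-- The `k`-th elementary symmetric function of the values of `lam` over the index
set `s ⊆ {1,…,n}`. -/
noncomputable def esymmOn {n : ℕ} (s : Finset (Fin n)) (k : ℕ) (lam : Fin n → ℝ) : ℝ :=
  ∑ t ∈ s.powersetCard k, ∏ i ∈ t, lam i

/-- The `k`-th elementary symmetric function `σ_k(λ)` on `ℝ^n`. -/
noncomputable def esymm (n k : ℕ) (lam : Fin n → ℝ) : ℝ :=
  esymmOn Finset.univ k lam

/-- The normalized `k`-th elementary symmetric function `H_k(λ) = σ_k(λ)/C(n,k)`. -/
noncomputable def Hnorm (n k : ℕ) (lam : Fin n → ℝ) : ℝ :=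
  esymm n k lam / (n.choose k)

/-- The Gårding cone `Γ_k^+ = {λ : σ_i(λ) > 0 for 1 ≤ i ≤ k}`. -/
def GammaPlus (n k : ℕ) : Set (Fin n → ℝ) :=
  {lam | ∀ i : ℕ, 1 ≤ i → i ≤ k → 0 < esymm n i lam}


section Helpers
set_option linter.unusedSectionVars false
open Polynomial


variable {ι : Type*} [DecidableEq ι]

/-- general elementary symmetric sum over a finset -/
noncomputable def E (s : Finset ι) (k : ℕ) (v : ι → ℝ) : ℝ :=
  ∑ t ∈ s.powersetCard k, ∏ i ∈ t, v i

lemma E_zero (s : Finset ι) (v : ι → ℝ) : E s 0 v = 1 := by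
  simp [E, Finset.powersetCard_zero]

lemma E_of_card_lt {s : Finset ι} {k : ℕ} (h : s.card < k) (v : ι → ℝ) : E s k v = 0 := by
  simp [E, Finset.powersetCard_eq_empty.2 h]

lemma E_split {s : Finset ι} {i : ι} (hi : i ∈ s) (k : ℕ) (v : ι → ℝ) :
    E s (k+1) v = E (s.erase i) (k+1) v + v i * E (s.erase i) k v := by
  classical
  have hins : s = insert i (s.erase i) := (Finset.insert_erase hi).symm
  have hnotmem : i ∉ s.erase i := Finset.notMem_erase i s
  have key : s.powersetCard (k+1) = (s.erase i).powersetCard (k+1)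
      ∪ ((s.erase i).powersetCard k).image (insert i) := by
    conv_lhs => rw [hins]
    exact Finset.powersetCard_succ_insert hnotmem (k)
  rw [E, key]
  have hdisj : Disjoint ((s.erase i).powersetCard (k+1))
      (((s.erase i).powersetCard k).image (insert i)) := by
    rw [Finset.disjoint_right]
    intro t ht ht'
    obtain ⟨u, hu, rfl⟩ := Finset.mem_image.1 ht
    have : i ∈ insert i u := Finset.mem_insert_self i u
    have hsub := (Finset.mem_powersetCard.1 ht').1
    exact hnotmem (hsub this)
  rw [Finset.sum_union hdisj]
  congr 1
  rw [Finset.sum_image]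
  · rw [E, Finset.mul_sum]
    refine Finset.sum_congr rfl fun t ht => ?_
    have hit : i ∉ t := fun h => hnotmem ((Finset.mem_powersetCard.1 ht).1 h)
    rw [Finset.prod_insert hit]
  · intro t ht u hu h
    have hit : i ∉ t := fun hh => hnotmem ((Finset.mem_powersetCard.1 ht).1 hh)
    have hiu : i ∉ u := fun hh => hnotmem ((Finset.mem_powersetCard.1 hu).1 hh)
    rw [← Finset.erase_insert hit, ← Finset.erase_insert hiu, h]

lemma E_one (s : Finset ι) (v : ι → ℝ) : E s 1 v = ∑ i ∈ s, v i := by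
  rw [E, Finset.powersetCard_one, Finset.sum_map]
  simp

lemma E_self (s : Finset ι) (v : ι → ℝ) : E s s.card v = ∏ i ∈ s, v i := by
  rw [E, Finset.powersetCard_self, Finset.sum_singleton]

lemma E_ones (s : Finset ι) (k : ℕ) : E s k (fun _ => 1) = (s.card.choose k : ℝ) := by
  rw [E]
  simp [Finset.card_powersetCard]

lemma E_smul (s : Finset ι) (k : ℕ) (c : ℝ) (v : ι → ℝ) :
    E s k (fun i => c * v i) = c ^ k * E s k v := by
  rw [E, E, Finset.mul_sum]
  refine Finset.sum_congr rfl fun t ht => ?_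
  rw [Finset.prod_mul_distrib, Finset.prod_const, (Finset.mem_powersetCard.1 ht).2]

lemma E_continuous (s : Finset ι) (k : ℕ) : Continuous fun v : ι → ℝ => E s k v := by
  refine continuous_finset_sum _ fun t _ => continuous_finset_prod _ fun i _ => continuous_apply i

lemma E_sq (s : Finset ι) (v : ι → ℝ) :
    (∑ i ∈ s, v i) ^ 2 = (∑ i ∈ s, (v i)^2) + 2 * E s 2 v := by
  classical
  induction s using Finset.induction_on with
  | empty => simp [E_of_card_lt (by simp : (∅:Finset ι).card < 2)]
  | @insert a s ha ih =>
    rw [Finset.sum_insert ha, Finset.sum_insert ha]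
    have hsplit : E (insert a s) 2 v = E s 2 v + v a * E s 1 v := by
      have := E_split (Finset.mem_insert_self a s) 1 v
      rwa [Finset.erase_insert ha] at this
    rw [hsplit, E_one, add_sq, ih]
    ring
lemma natDegree_deriv_eq (p : ℝ[X]) (hp : p.natDegree ≠ 0) :
    p.derivative.natDegree = p.natDegree - 1 := by
  refine le_antisymm (Polynomial.natDegree_derivative_le p) (Polynomial.le_natDegree_of_ne_zero ?_)
  rw [Polynomial.coeff_derivative]
  have h1 : p.natDegree - 1 + 1 = p.natDegree := by omega
  rw [h1]
  have hp0 : p ≠ 0 := fun h => hp (by simp [h])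
  have : p.coeff p.natDegree ≠ 0 := by
    rw [← Polynomial.leadingCoeff]
    exact Polynomial.leadingCoeff_ne_zero.2 hp0
  positivity

lemma deriv_splits (p : ℝ[X]) (hp : p.Splits) :
    p.derivative.Splits := by
  by_cases h0 : p.natDegree = 0
  · obtain ⟨a, rfl⟩ := Polynomial.natDegree_eq_zero.1 h0
    rw [Polynomial.derivative_C]
    exact Polynomial.Splits.zero
  · have hcard := Polynomial.splits_iff_card_roots.1 hp
    have hdeg := natDegree_deriv_eq p h0
    have hle := Polynomial.card_roots' p.derivative
    have hge := Polynomial.card_roots_le_derivative p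
    rw [Polynomial.splits_iff_card_roots]
    omega

lemma iterate_deriv_splits (m : ℕ) (p : ℝ[X]) (hp : p.Splits) :
    (Polynomial.derivative^[m] p).Splits := by
  induction m with
  | zero => exact hp
  | succ d ih => rw [Function.iterate_succ_apply']; exact deriv_splits _ ih

lemma E_compl {ι : Type*} [Fintype ι] [DecidableEq ι] (u : ι → ℝ) (hu : ∀ i, u i ≠ 0)
    (q : ℕ) (hq : q ≤ Fintype.card ι) :
    E Finset.univ (Fintype.card ι - q) u
      = (∏ i, u i) * E Finset.univ q (fun i => (u i)⁻¹) := by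
  rw [E, E, Finset.mul_sum]
  refine Finset.sum_nbij' (fun T => Tᶜ) (fun T => Tᶜ) ?_ ?_ ?_ ?_ ?_
  · intro T hT
    rw [Finset.mem_powersetCard_univ] at hT ⊢
    rw [Finset.card_compl, hT]
    omega
  · intro T hT
    rw [Finset.mem_powersetCard_univ] at hT ⊢
    rw [Finset.card_compl, hT]
  · intro T _; simp
  · intro T _; simp
  · intro T hT
    have hc : ∏ i ∈ Tᶜ, (u i)⁻¹ = (∏ i ∈ Tᶜ, u i)⁻¹ := by
      rw [Finset.prod_inv_distrib]
    rw [hc, eq_mul_inv_iff_mul_eq₀ (Finset.prod_ne_zero_iff.2 fun i _ => hu i)]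
    exact Finset.prod_mul_prod_compl T u

lemma descFactorial_cast_pos (a b : ℕ) (h : b ≤ a) : (0:ℝ) < (a.descFactorial b : ℝ) := by
  have : a.descFactorial b ≠ 0 := by
    intro hz
    have := Nat.descFactorial_eq_zero_iff_lt.1 hz
    omega
  positivity

/-- Newton's inequality at a zero of `σ_{k-1}`. -/
lemma newton_zero {ι : Type*} [DecidableEq ι] (s : Finset ι) (v : ι → ℝ) (k : ℕ)
    (hk2 : 2 ≤ k) (hks : k ≤ s.card) (h1 : E s (k-1) v = 0) :
    E s (k-2) v * E s k v ≤ 0 := by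
  classical
  by_cases hEk : E s k v = 0
  · simp [hEk]
  set N := s.card with hN
  set f : ℝ[X] := ∏ i ∈ s, (X + Polynomial.C (v i)) with hf
  have hcoeff : ∀ m, m ≤ N → f.coeff m = E s (N - m) v := fun m hm =>
    Finset.prod_X_add_C_coeff s v hm
  have hsplits : f.Splits :=
    Polynomial.Splits.prod fun i _ =>
      Polynomial.Splits.X_add_C _
  have hfdeg : f.natDegree = N := by
    rw [hf, Polynomial.natDegree_prod _ _ fun i _ => (Polynomial.monic_X_add_C (v i)).ne_zero]
    simp [Polynomial.natDegree_X_add_C, hN]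
  set g := Polynomial.derivative^[N - k] f with hg
  have hg_splits : g.Splits := iterate_deriv_splits _ _ hsplits
  have hgcoeff : ∀ m, m ≤ k →
      g.coeff m = ((m + (N-k)).descFactorial (N-k) : ℝ) * E s (k - m) v := by
    intro m hm
    rw [hg, Polynomial.coeff_iterate_derivative, hcoeff (m + (N-k)) (by omega), nsmul_eq_mul]
    congr 2
    omega
  have hgk : g.coeff k ≠ 0 := by
    rw [hgcoeff k le_rfl]
    simp only [Nat.sub_self, E_zero, mul_one]
    exact ne_of_gt (descFactorial_cast_pos _ _ (by omega))
  have hgdeg : g.natDegree = k := by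
    refine le_antisymm ?_ (Polynomial.le_natDegree_of_ne_zero hgk)
    have h := Polynomial.natDegree_iterate_derivative f (N - k)
    rw [← hg, hfdeg] at h
    omega
  have hroots : Multiset.card g.roots = k := by
    rw [Polynomial.splits_iff_card_roots.1 hg_splits, hgdeg]
  have hgne : g ≠ 0 := fun h => hgk (by simp [h])
  have hlc : g.leadingCoeff ≠ 0 := Polynomial.leadingCoeff_ne_zero.2 hgne
  have hco : ∀ m, m ≤ k →
      g.coeff m = g.leadingCoeff * ((-1)^(k-m) * g.roots.esymm (k-m)) := by
    intro m hm
    conv_lhs => rw [hg_splits.eq_prod_roots]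
    rw [Polynomial.coeff_C_mul,
      Multiset.prod_X_sub_C_coeff g.roots (le_of_le_of_eq hm hroots.symm), hroots]
  have hg0 : g.coeff 0 = ((0 + (N-k)).descFactorial (N-k) : ℝ) * E s k v := by
    have := hgcoeff 0 (by omega); simpa using this
  have h00 : g.coeff 0 ≠ 0 := by
    rw [hg0]
    exact mul_ne_zero (ne_of_gt (descFactorial_cast_pos _ _ (by omega))) hEk
  have hzero_not : (0:ℝ) ∉ g.roots := by
    intro hmem
    have hr := Polynomial.isRoot_of_mem_roots hmem
    rw [Polynomial.IsRoot, ← Polynomial.coeff_zero_eq_eval_zero] at hr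
    exact h00 hr
  set l := g.roots.toList with hl
  have hlen : l.length = k := by rw [hl, Multiset.length_toList, hroots]
  have hteq : (Finset.univ.val.map l.get : Multiset ℝ) = g.roots := by
    have h1 : (Finset.univ : Finset (Fin l.length)).val = ↑(List.finRange l.length) := by
      rw [Fin.univ_def]
    rw [h1, Multiset.map_coe, List.map_get_finRange, Multiset.coe_toList]
  have htesymm : ∀ j, g.roots.esymm j = E (Finset.univ : Finset (Fin l.length)) j l.get := by
    intro j
    rw [← hteq, Finset.esymm_map_val]
    rfl
  have hcardFin : Fintype.card (Fin l.length) = k := by simp [hlen]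
  have hune : ∀ i : Fin l.length, l.get i ≠ 0 := by
    intro i h0
    apply hzero_not
    rw [← Multiset.coe_toList g.roots]
    rw [← h0]
    exact Multiset.mem_coe.2 (List.get_mem l i)
  have hPne : (∏ i, l.get i) ≠ 0 := Finset.prod_ne_zero_iff.2 fun i _ => hune i
  -- esymm (k-1) vanishes
  have he1 : g.roots.esymm (k-1) = 0 := by
    have hca := hco 1 (by omega)
    have hcb := hgcoeff 1 (by omega)
    rw [h1, mul_zero] at hcb
    rw [hcb] at hca
    have := (mul_eq_zero.1 hca.symm).resolve_left hlc
    have h2 := (mul_eq_zero.1 this).resolve_left (by positivity :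
      ((-1:ℝ))^(k-1) ≠ 0)
    exact h2
  have hsum : ∑ i, (l.get i)⁻¹ = 0 := by
    have hcmp := E_compl l.get hune 1 (by omega)
    rw [hcardFin] at hcmp
    have h0' : E Finset.univ (k-1) l.get = 0 := by rw [← htesymm]; exact he1
    rw [h0', E_one] at hcmp
    have := (mul_eq_zero.1 hcmp.symm).resolve_left hPne
    exact this
  have hE2 : E (Finset.univ : Finset (Fin l.length)) 2 (fun i => (l.get i)⁻¹) ≤ 0 := by
    have hsq := E_sq (Finset.univ : Finset (Fin l.length)) (fun i => (l.get i)⁻¹)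
    rw [hsum] at hsq
    have hnn : (0:ℝ) ≤ ∑ i, ((l.get i)⁻¹)^2 :=
      Finset.sum_nonneg fun i _ => sq_nonneg _
    nlinarith
  have hek : g.roots.esymm k = ∏ i, l.get i := by
    rw [htesymm k]
    have hc : k = (Finset.univ : Finset (Fin l.length)).card := by simp [hlen]
    rw [hc, E_self]
  have hek2 : g.roots.esymm (k-2) = (∏ i, l.get i) * E Finset.univ 2 (fun i => (l.get i)⁻¹) := by
    have hcmp := E_compl l.get hune 2 (by omega)
    rw [hcardFin] at hcmp
    rw [htesymm]
    exact hcmp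
  have hprod_le : g.roots.esymm k * g.roots.esymm (k-2) ≤ 0 := by
    rw [hek, hek2]
    nlinarith [sq_nonneg (∏ i, l.get i), hE2]
  -- final combination
  have e1 : ((0 + (N-k)).descFactorial (N-k) : ℝ) * E s k v
      = g.leadingCoeff * ((-1)^k * g.roots.esymm k) := by
    have := (hg0.symm.trans (hco 0 (by omega)))
    simpa using this
  have e2 : ((2 + (N-k)).descFactorial (N-k) : ℝ) * E s (k-2) v
      = g.leadingCoeff * ((-1)^(k-2) * g.roots.esymm (k-2)) := by
    exact (hgcoeff 2 hk2).symm.trans (hco 2 hk2)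
  have hsign : ((-1:ℝ))^k * (-1)^(k-2) = 1 := by
    rw [← pow_add]
    have h2 : k + (k-2) = 2*(k-1) := by omega
    rw [h2, pow_mul]
    norm_num
  have emul : (((0 + (N-k)).descFactorial (N-k) : ℝ) * E s k v)
      * ((((2 + (N-k)).descFactorial (N-k)) : ℝ) * E s (k-2) v)
      = g.leadingCoeff^2 * (g.roots.esymm k * g.roots.esymm (k-2)) := by
    calc (((0 + (N-k)).descFactorial (N-k) : ℝ) * E s k v)
        * ((((2 + (N-k)).descFactorial (N-k)) : ℝ) * E s (k-2) v)
        = g.leadingCoeff^2 * (((-1:ℝ)^k * (-1)^(k-2))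
            * (g.roots.esymm k * g.roots.esymm (k-2))) := by rw [e1, e2]; ring
      _ = g.leadingCoeff^2 * (g.roots.esymm k * g.roots.esymm (k-2)) := by
            rw [hsign, one_mul]
  have hfinal : (((0 + (N-k)).descFactorial (N-k) : ℝ) * E s k v)
      * ((((2 + (N-k)).descFactorial (N-k)) : ℝ) * E s (k-2) v) ≤ 0 := by
    rw [emul]
    exact mul_nonpos_of_nonneg_of_nonpos (sq_nonneg _) hprod_le
  by_contra hcon
  push_neg at hcon
  have hD0 := descFactorial_cast_pos (0 + (N-k)) (N-k) (by omega)
  have hD2 := descFactorial_cast_pos (2 + (N-k)) (N-k) (by omega)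
  nlinarith [mul_pos (mul_pos hD0 hD2) hcon]

-- connection with the statement's definitions
lemma esymmOn_eq_E {n : ℕ} (s : Finset (Fin n)) (k : ℕ) (lam : Fin n → ℝ) :
    esymmOn s k lam = E s k lam := rfl

lemma esymm_eq_E {n : ℕ} (k : ℕ) (lam : Fin n → ℝ) :
    esymm n k lam = E Finset.univ k lam := rfl

lemma E_shift {n : ℕ} (j : ℕ) (hj : j ≤ n) (lam : Fin n → ℝ)
    (hpos : ∀ m, 1 ≤ m → m ≤ j → 0 < E Finset.univ m lam) (s : ℝ) (hs : 0 ≤ s) :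
    E Finset.univ j lam ≤ E Finset.univ j (fun i => lam i + s) := by
  classical
  have hcard : (Finset.univ : Finset (Fin n)).card = n := by
    rw [Finset.card_univ, Fintype.card_fin]
  set f : ℝ[X] := ∏ i, (X + Polynomial.C (lam i)) with hf
  have hfdeg : f.natDegree = n := by
    rw [hf, Polynomial.natDegree_prod _ _ fun i _ => (Polynomial.monic_X_add_C (lam i)).ne_zero]
    simp [Polynomial.natDegree_X_add_C, hcard]
  have hshift : E Finset.univ j (fun i => lam i + s) = (Polynomial.taylor s f).coeff (n - j) := by
    rw [Polynomial.taylor_apply]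
    have hcomp : f.comp (X + Polynomial.C s) = ∏ i, (X + Polynomial.C (lam i + s)) := by
      rw [hf, Polynomial.prod_comp]
      refine Finset.prod_congr rfl fun i _ => ?_
      rw [Polynomial.add_comp, Polynomial.X_comp, Polynomial.C_comp, Polynomial.C_add]
      ring
    rw [hcomp, Finset.prod_X_add_C_coeff _ _ (by omega : n - j ≤ #(Finset.univ : Finset (Fin n)))]
    have : #(Finset.univ : Finset (Fin n)) - (n - j) = j := by omega
    rw [this]
    rfl
  have hhd : ∀ m, m ≤ j → (Polynomial.hasseDeriv (n-j) f).coeff m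
      = ((m + (n-j)).choose (n-j) : ℝ) * E Finset.univ (j - m) lam := by
    intro m hm
    rw [Polynomial.hasseDeriv_coeff]
    have hco := Finset.prod_X_add_C_coeff (Finset.univ : Finset (Fin n)) lam
      (by omega : m + (n - j) ≤ #(Finset.univ : Finset (Fin n)))
    rw [← hf] at hco
    rw [hco]
    have : #(Finset.univ : Finset (Fin n)) - (m + (n - j)) = j - m := by omega
    rw [this]
    rfl
  have hdegh : (Polynomial.hasseDeriv (n-j) f).natDegree < j + 1 := by
    have := Polynomial.natDegree_hasseDeriv_le f (n-j)
    omega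
  rw [hshift, Polynomial.taylor_coeff, Polynomial.eval_eq_sum_range' hdegh]
  rw [Finset.sum_range_succ']
  have h0term : (Polynomial.hasseDeriv (n-j) f).coeff 0 * s ^ 0 = E Finset.univ j lam := by
    rw [hhd 0 (by omega)]
    simp
  rw [h0term]
  have hrest : 0 ≤ ∑ m ∈ Finset.range j, (Polynomial.hasseDeriv (n-j) f).coeff (m+1) * s^(m+1) := by
    refine Finset.sum_nonneg fun m hm => ?_
    have hmj : m + 1 ≤ j := by
      have := Finset.mem_range.1 hm; omega
    rw [hhd (m+1) hmj]
    have hE : 0 ≤ E Finset.univ (j - (m+1)) lam := by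
      rcases Nat.eq_zero_or_pos (j - (m+1)) with h|h
      · rw [h, E_zero]; norm_num
      · exact le_of_lt (hpos _ h (by omega))
    positivity
  linarith

lemma Gamma_shift {n k : ℕ} {lam : Fin n → ℝ} (hlam : lam ∈ GammaPlus n k) (hkn : k ≤ n)
    {s : ℝ} (hs : 0 ≤ s) : (fun i => lam i + s) ∈ GammaPlus n k := by
  intro m h1 hm
  have := E_shift m (by omega) lam (fun m' h1' hm' => hlam m' h1' (by omega)) s hs
  have hpos := hlam m h1 hm
  rw [esymm_eq_E] at hpos ⊢
  linarith

lemma Gamma_smul {n k : ℕ} {lam : Fin n → ℝ} (hlam : lam ∈ GammaPlus n k)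
    {c : ℝ} (hc : 0 < c) : (fun i => c * lam i) ∈ GammaPlus n k := by
  intro m h1 hm
  rw [esymm_eq_E, E_smul]
  have := hlam m h1 hm
  rw [esymm_eq_E] at this
  positivity

lemma Gamma_one {n k : ℕ} (hkn : k ≤ n) : (fun _ : Fin n => (1:ℝ)) ∈ GammaPlus n k := by
  intro m h1 hm
  rw [esymm_eq_E, E_ones]
  have : 0 < n.choose m := Nat.choose_pos (by omega)
  rw [Finset.card_univ, Fintype.card_fin]
  positivity

lemma pos_of_nonzero_path (F : ℝ → ℝ) (hc : ContinuousOn F (Set.Icc 0 1))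
    (hnz : ∀ u ∈ Set.Icc (0:ℝ) 1, F u ≠ 0) (h1 : 0 < F 1) : 0 < F 0 := by
  by_contra h
  push_neg at h
  have h0 : F 0 < 0 :=
    lt_of_le_of_ne h (hnz 0 ⟨le_refl _, zero_le_one⟩)
  have hsub := intermediate_value_Icc (zero_le_one (α := ℝ)) hc
  have h0mem : (0:ℝ) ∈ Set.Icc (F 0) (F 1) := ⟨le_of_lt h0, le_of_lt h1⟩
  obtain ⟨u, hu, hFu⟩ := hsub h0mem
  exact hnz u hu hFu

lemma main_pos {n : ℕ} (k : ℕ) (hk1 : 1 ≤ k) :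
    ∀ hkn : k ≤ n, ∀ lam ∈ GammaPlus n k, ∀ i : Fin n,
      0 < E (Finset.univ.erase i) (k-1) lam := by
  induction k, hk1 using Nat.le_induction with
  | base =>
    intro _ lam _ i
    simpa using (by rw [E_zero] : E (Finset.univ.erase i) 0 lam = 1) ▸ one_pos
  | succ k hk ih =>
    intro hkn lam hlam i
    have hsub : GammaPlus n (k+1) ⊆ GammaPlus n k := fun v hv m h1 hm => hv m h1 (by omega)
    have hIH : ∀ v ∈ GammaPlus n (k+1), 0 < E (Finset.univ.erase i) (k-1) v :=
      fun v hv => ih (by omega) v (hsub hv) i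
    have hcarder : (Finset.univ.erase i).card = n - 1 := by
      rw [Finset.card_erase_of_mem (Finset.mem_univ i), Finset.card_univ, Fintype.card_fin]
    -- nonvanishing of σ_k(λ∖i) on Γ_{k+1}
    have hnz : ∀ v ∈ GammaPlus n (k+1), E (Finset.univ.erase i) k v ≠ 0 := by
      intro v hv h0
      have hek2 := hIH v hv
      have hsplit1 := E_split (Finset.mem_univ i) k v
      have hgm : 0 < E Finset.univ (k+1) v := by
        have := hv (k+1) (by omega) le_rfl
        rwa [esymm_eq_E] at this
      rw [hsplit1, h0, mul_zero, add_zero] at hgm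
      by_cases hlt : k + 1 ≤ n - 1
      · have hnewton := newton_zero (Finset.univ.erase i) v (k+1) (by omega)
          (by omega) (by simpa using h0)
        have hkm : k + 1 - 2 = k - 1 := by omega
        rw [hkm] at hnewton
        nlinarith
      · have hzz : E (Finset.univ.erase i) (k+1) v = 0 := E_of_card_lt (by omega) v
        rw [hzz] at hgm
        exact lt_irrefl 0 hgm
    set f : (Fin n → ℝ) → ℝ := fun v => E (Finset.univ.erase i) k v with hfdef
    have hfc : Continuous f := E_continuous _ _
    have hone : (fun _ : Fin n => (1:ℝ)) ∈ GammaPlus n (k+1) := Gamma_one (by omega)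
    have hfone : 0 < f (fun _ => 1) := by
      rw [hfdef]
      simp only [E_ones, hcarder]
      have : 0 < (n-1).choose k := Nat.choose_pos (by omega)
      positivity
    -- segment from λ + 1 to 1
    have h2mem : ∀ u ∈ Set.Icc (0:ℝ) 1,
        (fun i' => (1-u) * lam i' + 1) ∈ GammaPlus n (k+1) := by
      intro u hu
      rcases eq_or_lt_of_le hu.2 with h|h
      · have : (fun i' : Fin n => (1-u) * lam i' + 1) = (fun _ : Fin n => (1:ℝ)) := by
          funext i'
          rw [← h]
          ring
        rw [this]
        exact hone
      · have hc : 0 < 1 - u := by linarith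
        have hmem : (fun i' => lam i' + (1-u)⁻¹) ∈ GammaPlus n (k+1) :=
          Gamma_shift hlam hkn (by positivity)
        have hres := Gamma_smul hmem hc
        have : (fun i' : Fin n => (1-u) * (lam i' + (1-u)⁻¹))
            = (fun i' : Fin n => (1-u) * lam i' + 1) := by
          funext i'
          field_simp
        rwa [this] at hres
    have h2 : 0 < f (fun i' => lam i' + 1) := by
      have := pos_of_nonzero_path (fun u => f (fun i' => (1-u) * lam i' + 1))
        (Continuous.continuousOn (hfc.comp (by continuity)))
        (fun u hu => hnz _ (h2mem u hu))
        (by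
          show 0 < f fun i' => (1-(1:ℝ)) * lam i' + 1
          have heq : (fun i' : Fin n => (1-(1:ℝ)) * lam i' + 1) = (fun _ : Fin n => (1:ℝ)) := by
            funext i'; ring
          rw [heq]
          exact hfone)
      simpa using this
    -- segment from λ to λ + 1
    have h1mem : ∀ u ∈ Set.Icc (0:ℝ) 1, (fun i' => lam i' + u) ∈ GammaPlus n (k+1) :=
      fun u hu => Gamma_shift hlam hkn hu.1
    have hfin := pos_of_nonzero_path (fun u => f (fun i' => lam i' + u))
      (Continuous.continuousOn (hfc.comp (by continuity)))
      (fun u hu => hnz _ (h1mem u hu))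
      h2
    simpa using hfin

end Helpers

/-- If `λ ∈ closure Γ_k^+`, then `σ_{k-1}(λ∖i) ≥ 0` for each `i`, i.e. the
`(k-1)`-th Newton transformation is positive semidefinite. -/
theorem newton_tensor_nonneg (n k : ℕ) (hn : 1 ≤ n) (hk1 : 1 ≤ k) (hk : k ≤ n)
    (lam : Fin n → ℝ) (hlam : lam ∈ closure (GammaPlus n k)) :
    ∀ i : Fin n, 0 ≤ esymmOn (Finset.univ.erase i) (k - 1) lam := by
  intro i
  have hclosed : IsClosed {v : Fin n → ℝ | 0 ≤ E (Finset.univ.erase i) (k-1) v} :=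
    isClosed_le continuous_const (E_continuous _ _)
  have hsubset : GammaPlus n k ⊆ {v : Fin n → ℝ | 0 ≤ E (Finset.univ.erase i) (k-1) v} :=
    fun v hv => le_of_lt (main_pos k hk1 hk v hv i)
  have := closure_minimal hsubset hclosed hlam
  rw [esymmOn_eq_E]
  exact this
end

section
/- Let $n \ge 2$ and let $k$ be an integer with $1 \le k \le n/2$. For every $\kappa = (\kappa_1,\dots,\kappa_n) \in \mathbb{R}^n$, writing $\tilde\kappa = (\kappa_1-1,\dots,\kappa_n-1)$, one has $\sum \prod_{m=1}^{k} \big( \kappa_{i_{2m-1}} \kappa_{i_{2m}} - 1 \big) = \binom{n}{2k} (2k)! \sum_{j=0}^{k} 2^{j} \binom{k}{j} H_{2k-j}(\tilde\kappa)$, where the sum on the left is over all $(2k)$-tuples $(i_1, \dots, i_{2k})$ of pairwise distinct indices in $\{1,\dots,n\}$. -/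
open Finset

section GBAux

variable {α : Type*} [Fintype α] [DecidableEq α]

omit [Fintype α] [DecidableEq α] in
lemma GB.snoc_inj_iff {N : ℕ} {g : Fin N → α} {a : α} :
    Function.Injective (Fin.snoc g a : Fin (N+1) → α) ↔
      Function.Injective g ∧ ∀ i, g i ≠ a := by
  constructor
  · intro h
    refine ⟨fun i j hij => ?_, fun i hi => ?_⟩
    · have := h (a₁ := i.castSucc) (a₂ := j.castSucc) (by simpa using hij)
      exact Fin.castSucc_injective _ this
    · have := h (a₁ := i.castSucc) (a₂ := Fin.last N) (by simpa using hi)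
      have h2 : (i.castSucc : Fin (N+1)).1 = (Fin.last N).1 := by rw [this]
      simp [Fin.last] at h2
      exact absurd h2 (by have := i.2; omega)
  · rintro ⟨hg, ha⟩ i j hij
    induction i using Fin.lastCases with
    | last =>
      induction j using Fin.lastCases with
      | last => rfl
      | cast j =>
        rw [Fin.snoc_last, Fin.snoc_castSucc] at hij
        exact absurd hij.symm (ha j)
    | cast i =>
      induction j using Fin.lastCases with
      | last =>
        rw [Fin.snoc_last, Fin.snoc_castSucc] at hij
        exact absurd hij (ha i)
      | cast j =>
        rw [Fin.snoc_castSucc, Fin.snoc_castSucc] at hij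
        rw [hg hij]

lemma GB.sumInjFull (t : ℕ) (μ : α → ℝ) :
    ∑ f ∈ (univ : Finset (Fin t → α)).filter (fun f => Function.Injective f), ∏ i, μ (f i)
      = (t.factorial : ℝ) * ∑ U ∈ powersetCard t (univ : Finset α), ∏ x ∈ U, μ x := by
  have hmaps : ∀ f ∈ (univ : Finset (Fin t → α)).filter (fun f => Function.Injective f),
      Finset.image f univ ∈ powersetCard t (univ : Finset α) := by
    intro f hf
    rw [mem_filter] at hf
    rw [mem_powersetCard]
    exact ⟨subset_univ _, by rw [card_image_of_injective _ hf.2, card_univ, Fintype.card_fin]⟩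
  rw [← Finset.sum_fiberwise_of_maps_to hmaps, Finset.mul_sum]
  refine Finset.sum_congr rfl fun U hU => ?_
  have hUcard : U.card = t := (mem_powersetCard.1 hU).2
  have hterm : ∀ f ∈ ((univ : Finset (Fin t → α)).filter (fun f => Function.Injective f)).filter
      (fun f => Finset.image f univ = U), ∏ i, μ (f i) = ∏ x ∈ U, μ x := by
    intro f hf
    rw [mem_filter, mem_filter] at hf
    rw [← hf.2, Finset.prod_image (fun x _ y _ h => hf.1.2 h)]
  rw [Finset.sum_congr rfl hterm, Finset.sum_const, nsmul_eq_mul]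
  congr 1
  have hcard : (((univ : Finset (Fin t → α)).filter (fun f => Function.Injective f)).filter
      (fun f => Finset.image f univ = U)).card = (univ : Finset (Fin t ↪ ↥U)).card := by
    refine Finset.card_bij' (fun f hf => ⟨fun x => ⟨f x, ?_⟩, fun x y hxy => ?_⟩)
      (fun e _ => fun x => (e x : α)) (fun f hf => mem_univ _) ?_ ?_ ?_
    · rw [mem_filter, mem_filter] at hf
      exact hf.2 ▸ Finset.mem_image_of_mem f (mem_univ x)
    · rw [mem_filter, mem_filter] at hf
      exact hf.1.2 (congrArg Subtype.val hxy)
    · intro e he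
      rw [mem_filter, mem_filter]
      have hinj : Function.Injective (fun x => (e x : α)) :=
        Subtype.coe_injective.comp e.injective
      refine ⟨⟨mem_univ _, hinj⟩, ?_⟩
      apply Finset.eq_of_subset_of_card_le
      · intro y hy
        rw [Finset.mem_image] at hy
        obtain ⟨x, _, rfl⟩ := hy
        exact (e x).2
      · rw [card_image_of_injective _ hinj, card_univ, Fintype.card_fin, hUcard]
    · intro f hf; rfl
    · intro e he; ext x; rfl
  rw [hcard, card_univ, Fintype.card_embedding_eq, Fintype.card_coe, Fintype.card_fin, hUcard,
    Nat.descFactorial_self]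

lemma GB.sumInjSeg (N : ℕ) : ∀ t : ℕ, t ≤ N → ∀ μ : α → ℝ,
    ∑ f ∈ (univ : Finset (Fin N → α)).filter (fun f => Function.Injective f),
        ∏ p ∈ (univ : Finset (Fin N)).filter (fun p => p.1 < t), μ (f p)
      = (((Fintype.card α - t).descFactorial (N - t) : ℕ) : ℝ) * (t.factorial : ℝ) *
        ∑ U ∈ powersetCard t (univ : Finset α), ∏ x ∈ U, μ x := by
  induction N with
  | zero =>
    intro t ht μ
    interval_cases t
    simp [GB.sumInjFull 0 μ, Function.injective_of_subsingleton]
  | succ N IH =>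
    intro t ht μ
    rcases Nat.eq_or_lt_of_le ht with h | h
    · subst h
      have hfil : (univ : Finset (Fin (N+1))).filter (fun p => p.1 < N+1) = univ :=
        Finset.filter_true_of_mem (fun p _ => p.2)
      rw [hfil, Nat.sub_self, Nat.descFactorial_zero, Nat.cast_one, one_mul]
      exact GB.sumInjFull (N+1) μ
    · have ht' : t ≤ N := by omega
      have hseg : (univ : Finset (Fin (N+1))).filter (fun p => p.1 < t)
          = Finset.image Fin.castSucc ((univ : Finset (Fin N)).filter (fun p => p.1 < t)) := by
        ext p
        simp only [mem_filter, mem_univ, true_and, Finset.mem_image]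
        constructor
        · intro hp
          refine ⟨⟨p.1, by omega⟩, hp, by ext; simp⟩
        · rintro ⟨q, hq, rfl⟩
          simpa using hq
      rw [Finset.sum_filter]
      have hre := Equiv.sum_comp (Fin.snocEquiv (fun _ => α))
        (fun f : Fin (N+1) → α => if Function.Injective f
          then ∏ p ∈ (univ : Finset (Fin (N+1))).filter (fun p => p.1 < t), μ (f p) else 0)
      rw [← hre, Fintype.sum_prod_type]
      have hprodsnoc : ∀ (a : α) (g : Fin N → α),
          ∏ p ∈ (univ : Finset (Fin (N+1))).filter (fun p => p.1 < t),
              μ ((Fin.snoc g a : Fin (N+1) → α) p)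
            = ∏ p ∈ (univ : Finset (Fin N)).filter (fun p => p.1 < t), μ (g p) := by
        intro a g
        rw [hseg, Finset.prod_image (fun x _ y _ h => Fin.castSucc_injective _ h)]
        exact Finset.prod_congr rfl fun q _ => by rw [Fin.snoc_castSucc]
      have hstep1 : ∀ g : Fin N → α, ∀ a : α,
          (if Function.Injective ((Fin.snocEquiv (fun _ => α)) (a, g))
             then ∏ p ∈ (univ : Finset (Fin (N+1))).filter (fun p => p.1 < t),
               μ ((Fin.snocEquiv (fun _ => α)) (a, g) p) else 0)
          = (if (Function.Injective g ∧ ∀ i, g i ≠ a)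
             then ∏ p ∈ (univ : Finset (Fin N)).filter (fun p => p.1 < t), μ (g p) else 0) := by
        intro g a
        have he : ((Fin.snocEquiv (fun _ => α)) (a, g)) = (Fin.snoc g a : Fin (N+1) → α) := rfl
        rw [he]; simp only [GB.snoc_inj_iff]
        by_cases hc : Function.Injective g ∧ ∀ i, g i ≠ a
        · rw [if_pos hc, if_pos hc, hprodsnoc]
        · rw [if_neg hc, if_neg hc]
      rw [Finset.sum_comm]
      calc ∑ g : Fin N → α, ∑ a : α,
            (if Function.Injective ((Fin.snocEquiv (fun _ => α)) (a, g))
             then ∏ p ∈ (univ : Finset (Fin (N+1))).filter (fun p => p.1 < t),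
               μ ((Fin.snocEquiv (fun _ => α)) (a, g) p) else 0)
          = ∑ g : Fin N → α, (if Function.Injective g then
              ((Fintype.card α - N : ℕ) : ℝ) *
              ∏ p ∈ (univ : Finset (Fin N)).filter (fun p => p.1 < t), μ (g p) else 0) := by
            refine Finset.sum_congr rfl fun g _ => ?_
            rw [Finset.sum_congr rfl (fun a _ => hstep1 g a)]
            by_cases hg : Function.Injective g
            · simp only [hg, true_and, if_true]
              rw [← Finset.sum_filter, Finset.sum_const, nsmul_eq_mul]
              congr 2
              have hset : (univ : Finset α).filter (fun a => ∀ i, g i ≠ a)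
                  = univ \ Finset.image g univ := by
                ext a
                simp [eq_comm]
              rw [hset, Finset.card_sdiff_of_subset (subset_univ _), card_univ,
                card_image_of_injective _ hg, card_univ, Fintype.card_fin]
            · simp [hg]
        _ = (((Fintype.card α - t).descFactorial (N + 1 - t) : ℕ) : ℝ) * (t.factorial : ℝ) *
            ∑ U ∈ powersetCard t (univ : Finset α), ∏ x ∈ U, μ x := by
            rw [← Finset.sum_filter, ← Finset.mul_sum, IH t ht' μ]
            have hnat : (Fintype.card α - t).descFactorial (N + 1 - t)
                = (Fintype.card α - N) * (Fintype.card α - t).descFactorial (N - t) := by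
              have h1 : N + 1 - t = (N - t) + 1 := by omega
              rw [h1, Nat.descFactorial_succ]
              congr 1
              omega
            rw [hnat, Nat.cast_mul]
            ring

lemma GB.sumInjSubset (N : ℕ) (T : Finset (Fin N)) (μ : α → ℝ) :
    ∑ f ∈ (univ : Finset (Fin N → α)).filter (fun f => Function.Injective f),
        ∏ p ∈ T, μ (f p)
      = (((Fintype.card α - T.card).descFactorial (N - T.card) : ℕ) : ℝ) *
        ((T.card).factorial : ℝ) *
        ∑ U ∈ powersetCard T.card (univ : Finset α), ∏ x ∈ U, μ x := by
  set t := T.card with htdef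
  have ht : t ≤ N := by
    have := Finset.card_le_univ T
    rwa [Fintype.card_fin] at this
  set Seg : Finset (Fin N) := (univ : Finset (Fin N)).filter (fun p => p.1 < t) with hSeg
  have hSegCard : Seg.card = t := by
    have himg : Seg = Finset.image (fun i : Fin t => Fin.castLE ht i) univ := by
      ext p
      simp only [hSeg, mem_filter, mem_univ, true_and, Finset.mem_image]
      constructor
      · intro hp
        exact ⟨⟨p.1, hp⟩, by apply Fin.ext; simp⟩
      · rintro ⟨i, rfl⟩
        exact i.2
    rw [himg, Finset.card_image_of_injective _ (Fin.castLE_injective ht), card_univ,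
      Fintype.card_fin]
  -- build a permutation sending T onto Seg
  have hcT : Fintype.card {x : Fin N // x ∈ T} = t := by rw [Fintype.card_coe]
  have hcS : Fintype.card {x : Fin N // x ∈ Seg} = t := by rw [Fintype.card_coe, hSegCard]
  have hcTc : Fintype.card {x : Fin N // ¬ x ∈ T} = N - t := by
    rw [Fintype.card_subtype_compl, hcT, Fintype.card_fin]
  have hcSc : Fintype.card {x : Fin N // ¬ x ∈ Seg} = N - t := by
    rw [Fintype.card_subtype_compl, hcS, Fintype.card_fin]
  obtain ⟨σ⟩ := Fintype.card_eq.mp (hcT.trans hcS.symm)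
  obtain ⟨τ⟩ := Fintype.card_eq.mp (hcTc.trans hcSc.symm)
  set π : Equiv.Perm (Fin N) :=
    (Equiv.sumCompl (· ∈ T)).symm.trans ((σ.sumCongr τ).trans (Equiv.sumCompl (· ∈ Seg)))
    with hπ
  have hπT : ∀ x ∈ T, π x ∈ Seg := by
    intro x hx
    have h1 : (Equiv.sumCompl (· ∈ T)).symm x = Sum.inl ⟨x, hx⟩ :=
      Equiv.sumCompl_symm_apply_of_pos hx
    have : π x = ((σ ⟨x, hx⟩ : {x : Fin N // x ∈ Seg}) : Fin N) := by
      rw [hπ]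
      simp [h1]
    rw [this]
    exact (σ ⟨x, hx⟩).2
  have himg : T.image π = Seg := by
    apply Finset.eq_of_subset_of_card_le
    · intro y hy
      rw [Finset.mem_image] at hy
      obtain ⟨x, hx, rfl⟩ := hy
      exact hπT x hx
    · rw [Finset.card_image_of_injective _ π.injective, hSegCard]
  -- reindex the sum
  have hre : ∑ f ∈ (univ : Finset (Fin N → α)).filter (fun f => Function.Injective f),
      ∏ p ∈ T, μ (f p)
      = ∑ f ∈ (univ : Finset (Fin N → α)).filter (fun f => Function.Injective f),
        ∏ p ∈ Seg, μ (f p) := by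
    refine Finset.sum_nbij' (i := fun f => f ∘ π.symm) (j := fun f => f ∘ π) ?_ ?_ ?_ ?_ ?_
    · intro f hf
      rw [mem_filter] at hf ⊢
      exact ⟨mem_univ _, hf.2.comp π.symm.injective⟩
    · intro f hf
      rw [mem_filter] at hf ⊢
      exact ⟨mem_univ _, hf.2.comp π.injective⟩
    · intro f _; funext x; simp
    · intro f _; funext x; simp
    · intro f _
      rw [← himg, Finset.prod_image (fun x _ y _ h => π.injective h)]
      exact Finset.prod_congr rfl fun p _ => by simp
  rw [hre, hSeg, GB.sumInjSeg N t ht μ]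

end GBAux

lemma GB.countSupp (k : ℕ) (F : ℕ → ℝ) :
    ∑ c : Fin k → Fin 3, F (((univ : Finset (Fin k)).filter (fun m => c m ≠ 0)).card)
      = ∑ j ∈ Finset.range (k+1), ((k.choose j * 2^j : ℕ) : ℝ) * F j := by
  have hmaps : ∀ c ∈ (univ : Finset (Fin k → Fin 3)),
      (univ : Finset (Fin k)).filter (fun m => c m ≠ 0) ∈ (univ : Finset (Fin k)).powerset :=
    fun c _ => mem_powerset.2 (subset_univ _)
  rw [← Finset.sum_fiberwise_of_maps_to hmaps
    (fun c => F (((univ : Finset (Fin k)).filter (fun m => c m ≠ 0)).card)),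
    Finset.sum_powerset]
  have hcardk : (univ : Finset (Fin k)).card = k := by rw [card_univ, Fintype.card_fin]
  rw [hcardk]
  refine Finset.sum_congr rfl fun j hj => ?_
  have hfib : ∀ A : Finset (Fin k),
      ((univ : Finset (Fin k → Fin 3)).filter
        (fun c => (univ : Finset (Fin k)).filter (fun m => c m ≠ 0) = A)).card = 2 ^ A.card := by
    intro A
    have hkey : ∀ v : Fin 3, (v ∈ ({1, 2} : Finset (Fin 3)) ↔ v ≠ 0) := by decide
    have hset : ((univ : Finset (Fin k → Fin 3)).filter
        (fun c => (univ : Finset (Fin k)).filter (fun m => c m ≠ 0) = A))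
        = Fintype.piFinset (fun m => if m ∈ A then ({1, 2} : Finset (Fin 3)) else {0}) := by
      ext c
      rw [mem_filter, Fintype.mem_piFinset]
      constructor
      · rintro ⟨-, hA⟩ m
        by_cases hm : m ∈ A
        · rw [if_pos hm, hkey]
          intro h0
          have : m ∈ (univ : Finset (Fin k)).filter (fun m => c m ≠ 0) := hA ▸ hm
          rw [mem_filter] at this
          exact this.2 h0
        · rw [if_neg hm, Finset.mem_singleton]
          by_contra hne
          have : m ∈ (univ : Finset (Fin k)).filter (fun m => c m ≠ 0) :=
            mem_filter.2 ⟨mem_univ _, hne⟩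
          exact hm (hA ▸ this)
      · intro h
        refine ⟨mem_univ _, ?_⟩
        ext m
        rw [mem_filter]
        constructor
        · rintro ⟨-, hm⟩
          by_contra hmA
          have := h m
          rw [if_neg hmA, Finset.mem_singleton] at this
          exact hm this
        · intro hm
          refine ⟨mem_univ _, ?_⟩
          have := h m
          rw [if_pos hm, hkey] at this
          exact this
    rw [hset, Fintype.card_piFinset]
    calc ∏ m : Fin k, (if m ∈ A then ({1, 2} : Finset (Fin 3)) else {0}).card
        = ∏ m : Fin k, (if m ∈ A then 2 else 1) := by
          refine Finset.prod_congr rfl fun m _ => ?_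
          by_cases hm : m ∈ A <;> simp [hm]
      _ = ∏ m ∈ (univ : Finset (Fin k)).filter (· ∈ A), 2 := (Finset.prod_filter _ _).symm
      _ = 2 ^ A.card := by
          rw [Finset.filter_mem_eq_inter, Finset.univ_inter, Finset.prod_const]
  have hterm : ∀ A ∈ powersetCard j (univ : Finset (Fin k)),
      ∑ c ∈ (univ : Finset (Fin k → Fin 3)).filter
        (fun c => (univ : Finset (Fin k)).filter (fun m => c m ≠ 0) = A),
        F (((univ : Finset (Fin k)).filter (fun m => c m ≠ 0)).card)
      = (2 ^ j : ℕ) * F j := by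
    intro A hA
    have hAcard : A.card = j := (mem_powersetCard.1 hA).2
    have : ∀ c ∈ (univ : Finset (Fin k → Fin 3)).filter
        (fun c => (univ : Finset (Fin k)).filter (fun m => c m ≠ 0) = A),
        F (((univ : Finset (Fin k)).filter (fun m => c m ≠ 0)).card) = F j := by
      intro c hc
      rw [mem_filter] at hc
      rw [hc.2, hAcard]
    rw [Finset.sum_congr rfl this, Finset.sum_const, hfib, hAcard, nsmul_eq_mul, Nat.cast_pow]
  rw [Finset.sum_congr rfl hterm, Finset.sum_const, Finset.card_powersetCard, hcardk,
    nsmul_eq_mul]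
  push_cast
  ring

set_option maxHeartbeats 1000000 in
/-- The Gauss–Bonnet curvature `L_k` of a hypersurface in hyperbolic space, expressed
through principal curvatures `κ`, equals
`C(n,2k) (2k)! ∑_{j=0}^k 2^j C(k,j) H_{2k-j}(κ̃)` where `κ̃ = κ - (1,…,1)`. -/
theorem gauss_bonnet_curvature_formula (n k : ℕ) (hn : 2 ≤ n) (hk1 : 1 ≤ k)
    (hk : 2 * k ≤ n) (κ : Fin n → ℝ) :
    ∑ f ∈ Finset.univ.filter (fun f : Fin (2 * k) → Fin n => Function.Injective f),
        ∏ m : Fin k,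
          (κ (f ⟨2 * m.1, by have := m.2; omega⟩) *
            κ (f ⟨2 * m.1 + 1, by have := m.2; omega⟩) - 1) =
      ((n.choose (2 * k) : ℕ) : ℝ) * ((Nat.factorial (2 * k) : ℕ) : ℝ) *
        ∑ j ∈ Finset.range (k + 1),
          (2 : ℝ) ^ j * ((k.choose j : ℕ) : ℝ) * Hnorm n (2 * k - j) (fun i => κ i - 1) := by
  set μ : Fin n → ℝ := fun i => κ i - 1 with hμ
  set A : Fin k → Fin (2 * k) := fun m => ⟨2 * m.1, by have := m.2; omega⟩ with hA
  set B : Fin k → Fin (2 * k) := fun m => ⟨2 * m.1 + 1, by have := m.2; omega⟩ with hB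
  set half : Fin (2 * k) → Fin k := fun p => ⟨p.1 / 2, by have := p.2; omega⟩ with hhalfdef
  set S : (Fin k → Fin 3) → Finset (Fin (2 * k)) := fun c =>
    (univ : Finset (Fin (2 * k))).filter
      (fun p => if p.1 % 2 = 0 then c (half p) ≠ 2 else c (half p) ≠ 1) with hS
  set T : (Fin (2 * k) → Fin n) → Fin k → Fin 3 → ℝ := fun f m v =>
    if v = 1 then μ (f (A m)) else if v = 2 then μ (f (B m))
    else μ (f (A m)) * μ (f (B m)) with hT
  have htri : ∀ v : Fin 3, v = 0 ∨ v = 1 ∨ v = 2 := by decide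
  have hAB : ∀ m : Fin k, A m ≠ B m := by
    intro m h
    have := congrArg Fin.val h
    simp [hA, hB] at this
  have hhalfor : ∀ (p : Fin (2 * k)) (m : Fin k), half p = m ↔ (p = A m ∨ p = B m) := by
    intro p m
    rw [Fin.ext_iff, Fin.ext_iff, Fin.ext_iff]
    show p.1 / 2 = m.1 ↔ (p.1 = 2 * m.1 ∨ p.1 = 2 * m.1 + 1)
    omega
  -- fiber computation
  have hfiber : ∀ (c : Fin k → Fin 3) (m : Fin k),
      (S c).filter (fun p => half p = m) =
        (if c m = 1 then {A m} else if c m = 2 then {B m} else {A m, B m}) := by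
    intro c m
    have hcondA : ∀ q : Fin (2 * k), q = A m →
        ((if q.1 % 2 = 0 then c (half q) ≠ 2 else c (half q) ≠ 1) ↔ c m ≠ 2) := by
      rintro q rfl
      have h2 : (A m).1 % 2 = 0 := by show (2 * m.1) % 2 = 0; omega
      have h3 : half (A m) = m := (hhalfor _ _).2 (Or.inl rfl)
      rw [if_pos h2, h3]
    have hcondB : ∀ q : Fin (2 * k), q = B m →
        ((if q.1 % 2 = 0 then c (half q) ≠ 2 else c (half q) ≠ 1) ↔ c m ≠ 1) := by
      rintro q rfl
      have h2 : ¬ ((B m).1 % 2 = 0) := by show ¬ ((2 * m.1 + 1) % 2 = 0); omega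
      have h3 : half (B m) = m := (hhalfor _ _).2 (Or.inr rfl)
      rw [if_neg h2, h3]
    ext p
    rw [Finset.mem_filter, hS]
    simp only [Finset.mem_filter, Finset.mem_univ, true_and]
    rcases htri (c m) with hv | hv | hv
    · have hif : (if c m = 1 then ({A m} : Finset (Fin (2 * k)))
          else if c m = 2 then {B m} else {A m, B m}) = {A m, B m} := by
        rw [hv, if_neg (by decide), if_neg (by decide)]
      rw [hif, Finset.mem_insert, Finset.mem_singleton]
      constructor
      · rintro ⟨hcond, hhm⟩
        exact (hhalfor p m).1 hhm
      · rintro (rfl | rfl)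
        · exact ⟨(hcondA _ rfl).2 (by rw [hv]; decide), (hhalfor _ _).2 (Or.inl rfl)⟩
        · exact ⟨(hcondB _ rfl).2 (by rw [hv]; decide), (hhalfor _ _).2 (Or.inr rfl)⟩
    · have hif : (if c m = 1 then ({A m} : Finset (Fin (2 * k)))
          else if c m = 2 then {B m} else {A m, B m}) = {A m} := by
        rw [hv, if_pos rfl]
      rw [hif, Finset.mem_singleton]
      constructor
      · rintro ⟨hcond, hhm⟩
        rcases (hhalfor p m).1 hhm with rfl | rfl
        · rfl
        · exact absurd hv ((hcondB _ rfl).1 hcond)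
      · rintro rfl
        exact ⟨(hcondA _ rfl).2 (by rw [hv]; decide), (hhalfor _ _).2 (Or.inl rfl)⟩
    · have hif : (if c m = 1 then ({A m} : Finset (Fin (2 * k)))
          else if c m = 2 then {B m} else {A m, B m}) = {B m} := by
        rw [hv, if_neg (by decide), if_pos rfl]
      rw [hif, Finset.mem_singleton]
      constructor
      · rintro ⟨hcond, hhm⟩
        rcases (hhalfor p m).1 hhm with rfl | rfl
        · exact absurd hv ((hcondA _ rfl).1 hcond)
        · rfl
      · rintro rfl
        exact ⟨(hcondB _ rfl).2 (by rw [hv]; decide), (hhalfor _ _).2 (Or.inr rfl)⟩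
  have hmapsS : ∀ c : Fin k → Fin 3, ∀ p ∈ S c, half p ∈ (univ : Finset (Fin k)) :=
    fun c p _ => mem_univ _
  -- cardinality of S c
  have hcardS : ∀ c : Fin k → Fin 3,
      (S c).card = 2 * k - ((univ : Finset (Fin k)).filter (fun m => c m ≠ 0)).card := by
    intro c
    have h1 : (S c).card = ∑ m : Fin k, ((S c).filter (fun p => half p = m)).card :=
      Finset.card_eq_sum_card_fiberwise (hmapsS c)
    have h2 : ∀ m : Fin k, ((S c).filter (fun p => half p = m)).card
        = if c m = 0 then 2 else 1 := by
      intro m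
      rw [hfiber c m]
      rcases htri (c m) with hv | hv | hv <;> rw [hv]
      · rw [if_neg (show ¬((0:Fin 3) = 1) by decide), if_neg (show ¬((0:Fin 3) = 2) by decide),
          if_pos rfl, Finset.card_insert_of_notMem (by simp [hAB m]), Finset.card_singleton]
      · rw [if_pos rfl, if_neg (show ¬((1:Fin 3) = 0) by decide), Finset.card_singleton]
      · rw [if_neg (show ¬((2:Fin 3) = 1) by decide), if_pos rfl,
          if_neg (show ¬((2:Fin 3) = 0) by decide), Finset.card_singleton]
    have h3 : ((univ : Finset (Fin k)).filter (fun m => c m ≠ 0)).card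
        = ∑ m : Fin k, if c m ≠ 0 then 1 else 0 := by
      rw [Finset.card_filter]
    have h4 : (S c).card + ((univ : Finset (Fin k)).filter (fun m => c m ≠ 0)).card
        = 2 * k := by
      rw [h1, h3, ← Finset.sum_add_distrib]
      have : ∀ m : Fin k, ((S c).filter (fun p => half p = m)).card
          + (if c m ≠ 0 then 1 else 0) = 2 := by
        intro m
        rw [h2 m]
        by_cases hv : c m = 0 <;> simp [hv]
      rw [Finset.sum_congr rfl (fun m _ => this m), Finset.sum_const, card_univ,
        Fintype.card_fin, smul_eq_mul]
      ring
    omega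
  -- step 1: expand each summand
  have hexpand : ∀ f : Fin (2 * k) → Fin n,
      ∏ m : Fin k, (κ (f (A m)) * κ (f (B m)) - 1)
        = ∑ c : Fin k → Fin 3, ∏ p ∈ S c, μ (f p) := by
    intro f
    have e1 : ∀ m : Fin k, κ (f (A m)) * κ (f (B m)) - 1 = ∑ v : Fin 3, T f m v := by
      intro m
      rw [Fin.sum_univ_three]
      simp only [hT]
      simp only [reduceIte, show ((1:Fin 3) = 2) = False by simp, show ((0:Fin 3) = 1) = False by simp,
        show ((0:Fin 3) = 2) = False by simp, show ((2:Fin 3) = 1) = False by simp, if_false]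
      rw [hμ]
      ring
    rw [Finset.prod_congr rfl (fun m _ => e1 m)]
    have e2 := Finset.prod_univ_sum (fun _ : Fin k => (univ : Finset (Fin 3))) (T f)
    rw [e2, Fintype.piFinset_univ]
    refine Finset.sum_congr rfl fun c _ => ?_
    rw [← Finset.prod_fiberwise_of_maps_to (hmapsS c) (fun p => μ (f p))]
    refine Finset.prod_congr rfl fun m _ => ?_
    rcases htri (c m) with hv | hv | hv
    · have hif : (if c m = 1 then ({A m} : Finset (Fin (2 * k)))
          else if c m = 2 then {B m} else {A m, B m}) = {A m, B m} := by
        rw [hv, if_neg (by decide), if_neg (by decide)]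
      rw [hfiber c m, hif, Finset.prod_insert (by simp [hAB m]), Finset.prod_singleton]
      simp only [hT, hv, show ((0:Fin 3) = 1) = False by simp,
        show ((0:Fin 3) = 2) = False by simp, if_false]
    · have hif : (if c m = 1 then ({A m} : Finset (Fin (2 * k)))
          else if c m = 2 then {B m} else {A m, B m}) = {A m} := by
        rw [hv, if_pos rfl]
      rw [hfiber c m, hif, Finset.prod_singleton]
      simp only [hT, hv, if_true, reduceIte]
    · have hif : (if c m = 1 then ({A m} : Finset (Fin (2 * k)))
          else if c m = 2 then {B m} else {A m, B m}) = {B m} := by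
        rw [hv, if_neg (by decide), if_pos rfl]
      rw [hfiber c m, hif, Finset.prod_singleton]
      simp only [hT, hv, show ((2:Fin 3) = 1) = False by simp, if_false, reduceIte]
  calc ∑ f ∈ Finset.univ.filter (fun f : Fin (2 * k) → Fin n => Function.Injective f),
        ∏ m : Fin k,
          (κ (f ⟨2 * m.1, by have := m.2; omega⟩) *
            κ (f ⟨2 * m.1 + 1, by have := m.2; omega⟩) - 1)
      = ∑ f ∈ Finset.univ.filter (fun f : Fin (2 * k) → Fin n => Function.Injective f),
          ∑ c : Fin k → Fin 3, ∏ p ∈ S c, μ (f p) :=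
        Finset.sum_congr rfl fun f _ => hexpand f
    _ = ∑ c : Fin k → Fin 3,
          ∑ f ∈ Finset.univ.filter (fun f : Fin (2 * k) → Fin n => Function.Injective f),
            ∏ p ∈ S c, μ (f p) := Finset.sum_comm
    _ = ∑ c : Fin k → Fin 3,
          (((n - (S c).card).descFactorial (2 * k - (S c).card) : ℕ) : ℝ) *
            (((S c).card).factorial : ℝ) *
            ∑ U ∈ powersetCard (S c).card (univ : Finset (Fin n)), ∏ x ∈ U, μ x := by
        refine Finset.sum_congr rfl fun c _ => ?_
        rw [GB.sumInjSubset (2 * k) (S c) μ, Fintype.card_fin]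
    _ = ∑ c : Fin k → Fin 3,
          (fun j => (((n - (2 * k - j)).descFactorial (2 * k - (2 * k - j)) : ℕ) : ℝ) *
            ((2 * k - j).factorial : ℝ) *
            ∑ U ∈ powersetCard (2 * k - j) (univ : Finset (Fin n)), ∏ x ∈ U, μ x)
          (((univ : Finset (Fin k)).filter (fun m => c m ≠ 0)).card) := by
        refine Finset.sum_congr rfl fun c _ => ?_
        simp only
        rw [← hcardS c]
    _ = ∑ j ∈ Finset.range (k + 1), ((k.choose j * 2 ^ j : ℕ) : ℝ) *
          ((((n - (2 * k - j)).descFactorial (2 * k - (2 * k - j)) : ℕ) : ℝ) *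
            ((2 * k - j).factorial : ℝ) *
            ∑ U ∈ powersetCard (2 * k - j) (univ : Finset (Fin n)), ∏ x ∈ U, μ x) :=
        GB.countSupp k (fun j => (((n - (2 * k - j)).descFactorial (2 * k - (2 * k - j)) : ℕ) : ℝ) *
            ((2 * k - j).factorial : ℝ) *
            ∑ U ∈ powersetCard (2 * k - j) (univ : Finset (Fin n)), ∏ x ∈ U, μ x)
    _ = ((n.choose (2 * k) : ℕ) : ℝ) * ((Nat.factorial (2 * k) : ℕ) : ℝ) *
        ∑ j ∈ Finset.range (k + 1),
          (2 : ℝ) ^ j * ((k.choose j : ℕ) : ℝ) * Hnorm n (2 * k - j) (fun i => κ i - 1) := by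
        rw [Finset.mul_sum]
        refine Finset.sum_congr rfl fun j hj => ?_
        rw [Finset.mem_range] at hj
        have hjk : j ≤ k := by omega
        set t := 2 * k - j with htdef
        have ht2k : t ≤ 2 * k := by omega
        have htn : t ≤ n := by omega
        have hjj : 2 * k - t = j := by omega
        have hchoose_ne : ((n.choose t : ℕ) : ℝ) ≠ 0 :=
          Nat.cast_ne_zero.2 (Nat.choose_pos htn).ne'
        have hnat : (n - t).descFactorial j * t.factorial * n.choose t
            = n.choose (2 * k) * (2 * k).factorial := by
          have hc1 : n.choose t * t.factorial = n.descFactorial t := by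
            have h1 := Nat.choose_mul_factorial_mul_factorial htn
            have h2 := Nat.factorial_mul_descFactorial htn
            have h3 := Nat.factorial_pos (n - t)
            nlinarith [h1, h2, h3]
          have hc2 : n.choose (2 * k) * (2 * k).factorial = n.descFactorial (2 * k) := by
            have h1 := Nat.choose_mul_factorial_mul_factorial hk
            have h2 := Nat.factorial_mul_descFactorial hk
            have h3 := Nat.factorial_pos (n - 2 * k)
            nlinarith [h1, h2, h3]
          have hc3 := Nat.descFactorial_mul_descFactorial (n := n) (k := t) (m := 2 * k) ht2k
          rw [hjj] at hc3
          calc (n - t).descFactorial j * t.factorial * n.choose t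
              = (n - t).descFactorial j * (n.choose t * t.factorial) := by ring
            _ = (n - t).descFactorial j * n.descFactorial t := by rw [hc1]
            _ = n.descFactorial (2 * k) := hc3
            _ = n.choose (2 * k) * (2 * k).factorial := hc2.symm
        have hHn : Hnorm n t (fun i => κ i - 1)
            = (∑ U ∈ powersetCard t (univ : Finset (Fin n)), ∏ x ∈ U, μ x)
              / ((n.choose t : ℕ) : ℝ) := by
          rw [Hnorm, esymm, esymmOn, hμ]
        rw [hjj, hHn]
        rw [div_eq_inv_mul, Nat.cast_mul]
        have hcast : ((n - t).descFactorial j : ℝ) * (t.factorial : ℝ) * ((n.choose t : ℕ) : ℝ)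
            = ((n.choose (2 * k) : ℕ) : ℝ) * (((2 * k).factorial : ℕ) : ℝ) := by
          exact_mod_cast congrArg (fun x : ℕ => (x : ℝ)) hnat
        field_simp
        simp only [Nat.cast_pow, Nat.cast_ofNat]
        linear_combination (((k.choose j : ℕ) : ℝ) * 2 ^ j *
          (∑ U ∈ powersetCard t (univ : Finset (Fin n)), ∏ x ∈ U, μ x)) * hcast
end
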